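/- Every theorem of the normal modal logic S4.1 = K+(T)+(4)+(.1) is valid on the general Kripke frame G_𝔄 = (𝔄, ⇝, Admiss(CTL)) over the class 𝔄 of all transition systems; that is, S4.1 ⊆ MLAR. -/
import Mathlib


namespace MLAR

/-- Modal formulas over a countably infinite set of propositional variables (indexed by ℕ). -/
inductive MF : Type where
  | top : MF
  | var : ℕ → MF
  | and : MF → MF → MF
  | neg : MF → MF
  | dia : MF → MF

namespace MF

/-- □φ := ¬◇¬φ -/
def box (φ : MF) : MF := neg (dia (neg φ))

/-- Material implication, definable classically from ∧ and ¬. -/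
def imp (φ ψ : MF) : MF := neg (and φ (neg ψ))

/-- Uniform substitution. -/
def subst (σ : ℕ → MF) : MF → MF
  | top => top
  | var p => σ p
  | and φ ψ => and (subst σ φ) (subst σ ψ)
  | neg φ => neg (subst σ φ)
  | dia φ => dia (subst σ φ)

/-- Satisfaction of a modal formula at a world of a Kripke model. -/
def Sat {W : Type*} (R : W → W → Prop) (V : ℕ → Set W) : MF → W → Prop
  | top, _ => True
  | var p, w => w ∈ V p
  | and φ ψ, w => Sat R V φ w ∧ Sat R V ψ w
  | neg φ, w => ¬ Sat R V φ w
  | dia φ, w => ∃ v, R w v ∧ Sat R V φ v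

end MF

/-- A boolean evaluation: respects ⊤, ∧, ¬, treating variables and ◇-formulas as atoms. -/
def IsPropEval (v : MF → Prop) : Prop :=
  v MF.top ∧ (∀ φ ψ, v (MF.and φ ψ) ↔ (v φ ∧ v ψ)) ∧ (∀ φ, v (MF.neg φ) ↔ ¬ v φ)

/-- Propositional tautologies. -/
def IsTautology (φ : MF) : Prop := ∀ v, IsPropEval v → v φ

/-- The K-axiom □(p→q)→(□p→□q). -/
def axK : MF := (((MF.var 0).imp (MF.var 1)).box).imp (((MF.var 0).box).imp ((MF.var 1).box))

/-- Normal modal logics. -/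
def IsNormal (L : Set MF) : Prop :=
  (∀ φ, IsTautology φ → φ ∈ L) ∧
  axK ∈ L ∧
  (∀ φ ψ, φ ∈ L → φ.imp ψ ∈ L → ψ ∈ L) ∧
  (∀ φ σ, φ ∈ L → φ.subst σ ∈ L) ∧
  (∀ φ, φ ∈ L → φ.box ∈ L)

/-- The smallest normal modal logic containing Γ. -/
def KPlus (Γ : Set MF) : Set MF := ⋂₀ {L | IsNormal L ∧ Γ ⊆ L}

/-- (T) = p → ◇p -/
def axT : MF := (MF.var 0).imp ((MF.var 0).dia)
/-- (4) = ◇◇p → ◇p -/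
def ax4 : MF := ((MF.var 0).dia.dia).imp ((MF.var 0).dia)
/-- (.2) = ◇□p → □◇p -/
def axDot2 : MF := ((MF.var 0).box.dia).imp ((MF.var 0).dia.box)
/-- (.1) = □◇p → ◇□p -/
def axDot1 : MF := ((MF.var 0).dia.box).imp ((MF.var 0).box.dia)
/-- Grzegorczyk axiom □(□(p→□p)→p)→p -/
def axGrz : MF := ((((MF.var 0).imp ((MF.var 0).box)).box.imp (MF.var 0)).box).imp (MF.var 0)

def S4 : Set MF := KPlus {axT, ax4}
def S4Dot2 : Set MF := KPlus {axT, ax4, axDot2}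
def S4Dot1 : Set MF := KPlus {axT, ax4, axDot1}
def S4Dot2Dot1 : Set MF := KPlus {axT, ax4, axDot2, axDot1}
def Grz : Set MF := KPlus {axGrz}

/-- Transition systems over a set AP of atomic propositions. -/
structure TS (AP : Type) : Type 1 where
  State : Type
  rel : State → State → Prop
  init : Set State
  label : State → Set AP
  nonempty : Nonempty State
  serial : ∀ s, ∃ t, rel s t

/-- `f` witnesses that T₁ is an abstraction of T₂. -/
def IsAbstractionMap {AP : Type} (T₁ T₂ : TS AP) (f : T₂.State → T₁.State) : Prop :=
  Function.Surjective f ∧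
  (∀ s, T₁.label (f s) = T₂.label s) ∧
  (∀ a b, T₁.rel a b ↔ ∃ s t, T₂.rel s t ∧ f s = a ∧ f t = b) ∧
  T₁.init = f '' T₂.init

/-- `Abs T₁ T₂` : T₁ is an abstraction of T₂ (written T₁ ⇝ T₂; T₂ is a refinement of T₁). -/
def Abs {AP : Type} (T₁ T₂ : TS AP) : Prop := ∃ f, IsAbstractionMap T₁ T₂ f

mutual
/-- CTL state formulas. -/
inductive CTLs (AP : Type) : Type where
  | top : CTLs AP
  | atom : AP → CTLs AP
  | and : CTLs AP → CTLs AP → CTLs AP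
  | neg : CTLs AP → CTLs AP
  | ex : CTLp AP → CTLs AP
  | al : CTLp AP → CTLs AP
/-- CTL path formulas. -/
inductive CTLp (AP : Type) : Type where
  | next : CTLs AP → CTLp AP
  | untl : CTLs AP → CTLs AP → CTLp AP
end

/-- Infinite paths of a transition system. -/
def TS.IsPath {AP : Type} (T : TS AP) (π : ℕ → T.State) : Prop := ∀ i, T.rel (π i) (π (i + 1))

mutual
/-- Satisfaction of CTL state formulas at states. -/
def CTLs.Sat {AP : Type} (T : TS AP) : CTLs AP → T.State → Prop
  | .top, _ => True
  | .atom a, s => a ∈ T.label s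
  | .and φ ψ, s => CTLs.Sat T φ s ∧ CTLs.Sat T ψ s
  | .neg φ, s => ¬ CTLs.Sat T φ s
  | .ex φ, s => ∃ π, T.IsPath π ∧ π 0 = s ∧ CTLp.Sat T φ π
  | .al φ, s => ∀ π, T.IsPath π → π 0 = s → CTLp.Sat T φ π
/-- Satisfaction of CTL path formulas on paths. -/
def CTLp.Sat {AP : Type} (T : TS AP) : CTLp AP → (ℕ → T.State) → Prop
  | .next φ, π => CTLs.Sat T φ (π 1)
  | .untl φ ψ, π => ∃ j, CTLs.Sat T ψ (π j) ∧ ∀ i, i < j → CTLs.Sat T φ (π i)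
end

/-- A transition system satisfies a CTL state formula iff all its initial states do. -/
def TS.sat {AP : Type} (T : TS AP) (Φ : CTLs AP) : Prop := ∀ s ∈ T.init, CTLs.Sat T Φ s

/-- Admissible valuations on the class C: each variable denotes a CTL-expressible set. -/
def AdmissibleVal {AP : Type} (C : Set (TS AP)) (V : ℕ → Set {S : TS AP // S ∈ C}) : Prop :=
  ∀ p, ∃ Φ : CTLs AP, ∀ S : {S : TS AP // S ∈ C}, S ∈ V p ↔ (S : TS AP).sat Φ

/-- The refinement accessibility relation ⇝ on the class C. -/
def refRel {AP : Type} (C : Set (TS AP)) :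
    {S : TS AP // S ∈ C} → {S : TS AP // S ∈ C} → Prop :=
  fun S₁ S₂ => Abs S₁.1 S₂.1

/-- Validity of a modal formula at a world of the general frame (C, ⇝, Admiss(CTL)). -/
def ValidAt {AP : Type} (C : Set (TS AP)) (φ : MF) (S : {S : TS AP // S ∈ C}) : Prop :=
  ∀ V, AdmissibleVal C V → MF.Sat (refRel C) V φ S

/-- Validity on the general frame (C, ⇝, Admiss(CTL)). -/
def ValidOn {AP : Type} (C : Set (TS AP)) (φ : MF) : Prop := ∀ S, ValidAt C φ S

/-- The class of all finite abstractions of T. -/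
def FinAbs {AP : Type} (T : TS AP) : Set (TS AP) := {S | Finite S.State ∧ Abs S T}

/-- The class of all abstractions of T. -/
def AllAbs {AP : Type} (T : TS AP) : Set (TS AP) := {S | Abs S T}

/-- MLAR^fin_T. -/
def MLARfin {AP : Type} (T : TS AP) : Set MF := {φ | ValidOn (FinAbs T) φ}
/-- MLAR^all_T. -/
def MLARall {AP : Type} (T : TS AP) : Set MF := {φ | ValidOn (AllAbs T) φ}
set_option linter.dupNamespace false in
/-- MLAR on the class of all transition systems over the fixed countably infinite AP = ℕ. -/
def MLAR : Set MF := {φ | ValidOn (Set.univ : Set (TS ℕ)) φ}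

/-- Finite partial functions {0,…,n−1} ⇀ {0,1}. -/
def FPF (n : ℕ) : Type := Fin n → Option Bool

/-- g ≼ h iff h extends g. -/
def FPFle {n : ℕ} (g h : FPF n) : Prop := ∀ i x, g i = some x → h i = some x

/-- The modal logic of all finite partial function posets. -/
def S4FPF : Set MF := {φ | ∀ n : ℕ, ∀ V : ℕ → Set (FPF n), ∀ w, MF.Sat FPFle V φ w}

/-- Admissible-set algebra of a general Kripke frame:
closed under complements and finite (including empty and binary) unions. -/
def IsGeneralFrameAdmiss {W : Type*} (𝒜 : Set (Set W)) : Prop :=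
  (∅ : Set W) ∈ 𝒜 ∧ (∀ A ∈ 𝒜, Aᶜ ∈ 𝒜) ∧ (∀ A ∈ 𝒜, ∀ B ∈ 𝒜, A ∪ B ∈ 𝒜)

/-- Formulas valid at a world of a general Kripke frame (W, R, 𝒜). -/
def GValidAt {W : Type*} (R : W → W → Prop) (𝒜 : Set (Set W)) (φ : MF) (c : W) : Prop :=
  ∀ V : ℕ → Set W, (∀ p, V p ∈ 𝒜) → MF.Sat R V φ c

/-- A is a pure button at c: □(b→□b) and □◇b hold at c under V(b) = A. -/
def PureButton {W : Type*} (R : W → W → Prop) (c : W) (A : Set W) : Prop :=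
  (∀ d, R c d → d ∈ A → ∀ e, R d e → e ∈ A) ∧ (∀ d, R c d → ∃ e, R d e ∧ e ∈ A)

/-- A is a pure weak button at c: □(b→□b) and ◇b hold at c under V(b) = A. -/
def PureWeakButton {W : Type*} (R : W → W → Prop) (c : W) (A : Set W) : Prop :=
  (∀ d, R c d → d ∈ A → ∀ e, R d e → e ∈ A) ∧ (∃ e, R c e ∧ e ∈ A)

/-- B is a switch at c: □(◇s ∧ ◇¬s) holds at c under V(s) = B. -/
def IsSwitch {W : Type*} (R : W → W → Prop) (c : W) (B : Set W) : Prop :=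
  ∀ d, R c d → (∃ e, R d e ∧ e ∈ B) ∧ (∃ e, R d e ∧ e ∉ B)

/-- C is a B-restricted switch at c:
□(¬B → (◇(s ∧ ¬B) ∧ ◇(¬s ∧ ¬B))) holds at c under V(s) = C. -/
def RestrictedSwitch {W : Type*} (R : W → W → Prop) (c : W) (B C : Set W) : Prop :=
  ∀ d, R c d → d ∉ B →
    (∃ e, R d e ∧ e ∈ C ∧ e ∉ B) ∧ (∃ e, R d e ∧ e ∉ C ∧ e ∉ B)

/-- Independence of unpushed pure buttons A and switches B at c. -/
def Independent {W : Type*} (R : W → W → Prop) (c : W) {n m : ℕ}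
    (A : Fin n → Set W) (B : Fin m → Set W) : Prop :=
  ∀ (I₀ I₁ : Set (Fin n)) (J₀ J₁ : Set (Fin m)), I₀ ⊆ I₁ →
    ∀ d, R c d →
      ((∀ i, i ∈ I₀ ↔ d ∈ A i) ∧ (∀ j, j ∈ J₀ ↔ d ∈ B j)) →
      ∃ e, R d e ∧ (∀ i, i ∈ I₁ ↔ e ∈ A i) ∧ (∀ j, j ∈ J₁ ↔ e ∈ B j)

/-- Independence until B of pure buttons A and B-restricted switches C at c. -/
def IndependentUntil {W : Type*} (R : W → W → Prop) (c : W) (Bb : Set W) {n m : ℕ}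
    (A : Fin n → Set W) (C : Fin m → Set W) : Prop :=
  ∀ (I₀ I₁ : Set (Fin n)) (J₀ J₁ : Set (Fin m)), I₀ ⊆ I₁ →
    ∀ d, R c d →
      ((∀ i, i ∈ I₀ ↔ d ∈ A i) ∧ (∀ j, j ∈ J₀ ↔ d ∈ C j) ∧ d ∉ Bb) →
      ∃ e, R d e ∧ (∀ i, i ∈ I₁ ↔ e ∈ A i) ∧ (∀ j, j ∈ J₁ ↔ e ∈ C j) ∧ e ∉ Bb

/-- (L, Rr) is a decision at c: a pair of mutually exclusive unpushed pure weak buttons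
whose union is an unpushed pure button, with □(¬l ∨ ¬r) and □((◇l ∧ ◇r) ∨ l ∨ r) at c. -/
def Decision {W : Type*} (R : W → W → Prop) (c : W) (L Rr : Set W) : Prop :=
  PureWeakButton R c L ∧ c ∉ L ∧
  PureWeakButton R c Rr ∧ c ∉ Rr ∧
  PureButton R c (L ∪ Rr) ∧ c ∉ L ∪ Rr ∧
  (∀ d, R c d → ¬(d ∈ L ∧ d ∈ Rr)) ∧
  (∀ d, R c d → (((∃ e, R d e ∧ e ∈ L) ∧ (∃ e, R d e ∧ e ∈ Rr)) ∨ d ∈ L ∨ d ∈ Rr))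

/-- Independence of decisions at c. -/
def IndependentDecisions {W : Type*} (R : W → W → Prop) (c : W) {n : ℕ}
    (L Rr : Fin n → Set W) : Prop :=
  ∀ (I₀ I₁ J₀ J₁ : Set (Fin n)), I₀ ⊆ I₁ → J₀ ⊆ J₁ → (∀ i ∈ J₁, i ∉ I₁) →
    ∀ d, R c d →
      ((∀ i, i ∈ I₀ ↔ d ∈ L i) ∧ (∀ i, i ∈ J₀ ↔ d ∈ Rr i)) →
      ∃ e, R d e ∧ (∀ i, i ∈ I₁ ↔ e ∈ L i) ∧ (∀ i, i ∈ J₁ ↔ e ∈ Rr i)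

/-! ### Auxiliary development for Statement 4 -/

section Aux

open Classical

namespace MF

theorem sat_imp {W : Type*} {R : W → W → Prop} {V : ℕ → Set W} {φ ψ : MF} {w : W} :
    Sat R V (φ.imp ψ) w ↔ (Sat R V φ w → Sat R V ψ w) := by
  simp only [imp, Sat]; tauto

theorem sat_box {W : Type*} {R : W → W → Prop} {V : ℕ → Set W} {φ : MF} {w : W} :
    Sat R V φ.box w ↔ ∀ v, R w v → Sat R V φ v := by
  simp only [box, Sat]; push_neg; rfl

theorem subst_imp (σ : ℕ → MF) (φ ψ : MF) :
    (φ.imp ψ).subst σ = (φ.subst σ).imp (ψ.subst σ) := rfl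

theorem subst_box (σ : ℕ → MF) (φ : MF) : φ.box.subst σ = (φ.subst σ).box := rfl

theorem sat_subst {W : Type*} (R : W → W → Prop) (V : ℕ → Set W) (σ : ℕ → MF) :
    ∀ (φ : MF) (w : W),
      Sat R V (φ.subst σ) w ↔ Sat R (fun p => {x | Sat R V (σ p) x}) φ w := by
  intro φ
  induction φ with
  | top => intro w; simp [subst, Sat]
  | var p => intro w; simp [subst, Sat, Set.mem_setOf_eq]
  | and φ ψ ih1 ih2 => intro w; simp only [subst, Sat, ih1, ih2]
  | neg φ ih => intro w; simp only [subst, Sat, ih]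
  | dia φ ih => intro w; simp only [subst, Sat, ih]

theorem subst_subst (σ τ : ℕ → MF) :
    ∀ φ : MF, (φ.subst τ).subst σ = φ.subst (fun p => (τ p).subst σ) := by
  intro φ
  induction φ with
  | top => rfl
  | var p => rfl
  | and φ ψ ih1 ih2 => simp only [subst, ih1, ih2]
  | neg φ ih => simp only [subst, ih]
  | dia φ ih => simp only [subst, ih]

theorem subst_var : ∀ φ : MF, φ.subst MF.var = φ := by
  intro φ
  induction φ with
  | top => rfl
  | var p => rfl
  | and φ ψ ih1 ih2 => simp only [subst, ih1, ih2]
  | neg φ ih => simp only [subst, ih]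
  | dia φ ih => simp only [subst, ih]

end MF

/-- Any substitution instance of a tautology is true everywhere. -/
theorem taut_sat {φ : MF} (h : IsTautology φ) {W : Type*} (R : W → W → Prop)
    (V : ℕ → Set W) (σ : ℕ → MF) (w : W) : MF.Sat R V (φ.subst σ) w := by
  refine h (fun χ => MF.Sat R V (χ.subst σ) w) ?_
  refine ⟨?_, ?_, ?_⟩
  · simp [MF.subst, MF.Sat]
  · intro α β; simp [MF.subst, MF.Sat]
  · intro α; simp [MF.subst, MF.Sat]

/-- The reflexivity of the abstraction relation. -/
theorem abs_refl {AP : Type} (T : TS AP) : Abs T T := by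
  refine ⟨id, Function.surjective_id, fun s => rfl, ?_, (Set.image_id _).symm⟩
  intro a b
  constructor
  · intro h; exact ⟨a, b, h, rfl, rfl⟩
  · rintro ⟨s, t, h, rfl, rfl⟩; exact h

/-- Transitivity of the abstraction relation. -/
theorem abs_trans {AP : Type} {T₁ T₂ T₃ : TS AP} (h12 : Abs T₁ T₂) (h23 : Abs T₂ T₃) :
    Abs T₁ T₃ := by
  obtain ⟨f, hf1, hf2, hf3, hf4⟩ := h12
  obtain ⟨g, hg1, hg2, hg3, hg4⟩ := h23
  refine ⟨f ∘ g, hf1.comp hg1, fun s => (hf2 (g s)).trans (hg2 s), ?_, ?_⟩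
  · intro a b
    constructor
    · intro h
      obtain ⟨s, t, hst, hs, ht⟩ := (hf3 a b).1 h
      obtain ⟨s', t', hst', hs', ht'⟩ := (hg3 s t).1 hst
      exact ⟨s', t', hst', by simp [Function.comp, hs', hs], by simp [Function.comp, ht', ht]⟩
    · rintro ⟨s, t, hst, rfl, rfl⟩
      exact (hf3 _ _).2 ⟨g s, g t, (hg3 _ _).2 ⟨s, t, hst, rfl, rfl⟩, rfl, rfl⟩
  · rw [hf4, hg4, Set.image_image]; rfl

/-- A good bisimulation between two transition systems (total both ways,
label preserving, forth and back, init matching both ways). -/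
structure GoodZ {AP : Type} (T U : TS AP) (Z : T.State → U.State → Prop) : Prop where
  lab : ∀ t u, Z t u → T.label t = U.label u
  totL : ∀ t, ∃ u, Z t u
  totR : ∀ u, ∃ t, Z t u
  forth : ∀ t u t', Z t u → T.rel t t' → ∃ u', U.rel u u' ∧ Z t' u'
  back : ∀ t u u', Z t u → U.rel u u' → ∃ t', T.rel t t' ∧ Z t' u'
  initL : ∀ t ∈ T.init, ∃ u ∈ U.init, Z t u
  initR : ∀ u ∈ U.init, ∃ t ∈ T.init, Z t u

def Bisim {AP : Type} (T U : TS AP) : Prop := ∃ Z, GoodZ T U Z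

theorem GoodZ.symm {AP : Type} {T U : TS AP} {Z : T.State → U.State → Prop}
    (h : GoodZ T U Z) : GoodZ U T (fun u t => Z t u) where
  lab := fun u t hz => (h.lab t u hz).symm
  totL := h.totR
  totR := h.totL
  forth := fun u t u' hz hr => h.back t u u' hz hr
  back := fun u t t' hz hr => h.forth t u t' hz hr
  initL := h.initR
  initR := h.initL

theorem Bisim.symm {AP : Type} {T U : TS AP} (h : Bisim T U) : Bisim U T := by
  obtain ⟨Z, hZ⟩ := h; exact ⟨_, hZ.symm⟩

/-- Lifting a path along a bisimulation. -/
theorem GoodZ.liftPath {AP : Type} {T U : TS AP} {Z : T.State → U.State → Prop}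
    (hZ : GoodZ T U Z) {π : ℕ → T.State} (hπ : T.IsPath π) {u : U.State}
    (h0 : Z (π 0) u) : ∃ ρ : ℕ → U.State, U.IsPath ρ ∧ ρ 0 = u ∧ ∀ i, Z (π i) (ρ i) := by
  have key : ∀ n (v : {v : U.State // Z (π n) v}),
      ∃ u', U.rel v.1 u' ∧ Z (π (n + 1)) u' := fun n v => hZ.forth _ _ _ v.2 (hπ n)
  let F : ∀ n : ℕ, {v : U.State // Z (π n) v} := fun n =>
    Nat.rec ⟨u, h0⟩ (fun n p => ⟨(key n p).choose, (key n p).choose_spec.2⟩) n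
  refine ⟨fun n => (F n).1, ?_, rfl, fun i => (F i).2⟩
  intro n
  exact (key n (F n)).choose_spec.1

mutual

theorem ctls_inv {AP : Type} {T U : TS AP} {Z : T.State → U.State → Prop}
    (hZ : GoodZ T U Z) (Φ : CTLs AP) :
    ∀ t u, Z t u → (CTLs.Sat T Φ t ↔ CTLs.Sat U Φ u) :=
  match Φ with
  | .top => fun _ _ _ => by simp [CTLs.Sat]
  | .atom a => fun t u h => by simp [CTLs.Sat, hZ.lab t u h]
  | .and φ ψ => fun t u h => by
      simp only [CTLs.Sat, ctls_inv hZ φ t u h, ctls_inv hZ ψ t u h]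
  | .neg φ => fun t u h => by
      simp only [CTLs.Sat, ctls_inv hZ φ t u h]
  | .ex φ => fun t u h => by
      simp only [CTLs.Sat]
      constructor
      · rintro ⟨π, hπ, h0, hsat⟩
        obtain ⟨ρ, hρ, hρ0, hzz⟩ := hZ.liftPath hπ (h0 ▸ h)
        exact ⟨ρ, hρ, hρ0, (ctlp_inv hZ φ π ρ hzz).1 hsat⟩
      · rintro ⟨ρ, hρ, h0, hsat⟩
        obtain ⟨π, hπ, hπ0, hzz⟩ := hZ.symm.liftPath hρ (h0 ▸ h)
        exact ⟨π, hπ, hπ0, (ctlp_inv hZ φ π ρ hzz).2 hsat⟩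
  | .al φ => fun t u h => by
      simp only [CTLs.Sat]
      constructor
      · intro hAll ρ hρ hρ0
        obtain ⟨π, hπ, hπ0, hzz⟩ := hZ.symm.liftPath hρ (hρ0 ▸ h)
        exact (ctlp_inv hZ φ π ρ hzz).1 (hAll π hπ hπ0)
      · intro hAll π hπ hπ0
        obtain ⟨ρ, hρ, hρ0, hzz⟩ := hZ.liftPath hπ (hπ0 ▸ h)
        exact (ctlp_inv hZ φ π ρ hzz).2 (hAll ρ hρ hρ0)

theorem ctlp_inv {AP : Type} {T U : TS AP} {Z : T.State → U.State → Prop}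
    (hZ : GoodZ T U Z) (φ : CTLp AP) :
    ∀ (π : ℕ → T.State) (ρ : ℕ → U.State), (∀ i, Z (π i) (ρ i)) →
      (CTLp.Sat T φ π ↔ CTLp.Sat U φ ρ) :=
  match φ with
  | .next Φ => fun π ρ hzz => by
      simp only [CTLp.Sat]
      exact ctls_inv hZ Φ (π 1) (ρ 1) (hzz 1)
  | .untl Φ Ψ => fun π ρ hzz => by
      simp only [CTLp.Sat]
      constructor
      · rintro ⟨j, hj, hlt⟩
        exact ⟨j, (ctls_inv hZ Ψ _ _ (hzz j)).1 hj,
          fun i hi => (ctls_inv hZ Φ _ _ (hzz i)).1 (hlt i hi)⟩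
      · rintro ⟨j, hj, hlt⟩
        exact ⟨j, (ctls_inv hZ Ψ _ _ (hzz j)).2 hj,
          fun i hi => (ctls_inv hZ Φ _ _ (hzz i)).2 (hlt i hi)⟩

end

/-- Bisimilar systems satisfy the same CTL state formulas. -/
theorem bisim_sat {AP : Type} {T U : TS AP} (h : Bisim T U) (Φ : CTLs AP) :
    T.sat Φ ↔ U.sat Φ := by
  obtain ⟨Z, hZ⟩ := h
  constructor
  · intro hT u hu
    obtain ⟨t, ht, hz⟩ := hZ.initR u hu
    exact (ctls_inv hZ Φ t u hz).1 (hT t ht)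
  · intro hU t ht
    obtain ⟨u, hu, hz⟩ := hZ.initL t ht
    exact (ctls_inv hZ Φ t u hz).2 (hU u hu)

/-- Deterministic transition systems. -/
def DetTS {AP : Type} (D : TS AP) : Prop := ∀ a b c, D.rel a b → D.rel a c → b = c

/-- Every transition system has a deterministic refinement. -/
theorem exists_det_ref {AP : Type} (T : TS AP) : ∃ D : TS AP, Abs T D ∧ DetTS D := by
  classical
  set nxt : T.State → T.State := fun s => (T.serial s).choose with hnxtdef
  have hnxt : ∀ s, T.rel s (nxt s) := fun s => (T.serial s).choose_spec
  set ray : T.State → ℕ → T.State := fun s n => nxt^[n] s with hraydef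
  have hray0 : ∀ s, ray s 0 = s := fun s => rfl
  have hrayPath : ∀ s, T.IsPath (ray s) := by
    intro s i
    have h : ray s (i + 1) = nxt (ray s i) := Function.iterate_succ_apply' nxt i s
    rw [h]; exact hnxt _
  obtain ⟨t₀⟩ := T.nonempty
  refine ⟨{ State := {q : (ℕ → T.State) × ℕ // T.IsPath q.1}
            rel := fun a b => b.1.1 = a.1.1 ∧ b.1.2 = a.1.2 + 1
            init := {a | a.1.2 = 0 ∧ a.1.1 0 ∈ T.init}
            label := fun a => T.label (a.1.1 a.1.2)
            nonempty := ⟨⟨(ray t₀, 0), hrayPath t₀⟩⟩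
            serial := fun a => ⟨⟨(a.1.1, a.1.2 + 1), a.2⟩, rfl, rfl⟩ }, ?_, ?_⟩
  · refine ⟨fun a => a.1.1 a.1.2, ?_, fun a => rfl, ?_, ?_⟩
    · intro s; exact ⟨⟨(ray s, 0), hrayPath s⟩, hray0 s⟩
    · intro x y
      constructor
      · intro h
        set π : ℕ → T.State := fun n => Nat.casesOn n x (fun m => ray y m) with hπdef
        have hπ : T.IsPath π := by
          intro i
          cases i with
          | zero => simpa [hπdef, hray0] using h
          | succ m => exact hrayPath y m
        exact ⟨⟨(π, 0), hπ⟩, ⟨(π, 1), hπ⟩, ⟨rfl, rfl⟩, rfl, hray0 y⟩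
      · rintro ⟨a, b, ⟨h1, h2⟩, rfl, rfl⟩
        show T.rel (a.1.1 a.1.2) (b.1.1 b.1.2)
        rw [h1, h2]
        exact a.2 a.1.2
    · ext s
      constructor
      · intro hs
        exact ⟨⟨(ray s, 0), hrayPath s⟩, ⟨rfl, by simpa [hray0] using hs⟩, hray0 s⟩
      · rintro ⟨a, ⟨ha0, hai⟩, rfl⟩
        show a.1.1 a.1.2 ∈ T.init
        rw [ha0]; exact hai
  · rintro a b c ⟨hb1, hb2⟩ ⟨hc1, hc2⟩
    apply Subtype.ext
    apply Prod.ext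
    · rw [hb1, hc1]
    · rw [hb2, hc2]

/-- Any refinement of a deterministic system is bisimilar to it. -/
theorem det_bisim {AP : Type} {D E : TS AP} (hd : DetTS D) (h : Abs D E) : Bisim D E := by
  obtain ⟨f, hf1, hf2, hf3, hf4⟩ := h
  refine ⟨fun d e => f e = d, ?_⟩
  constructor
  · rintro d e rfl; exact hf2 e
  · intro d; obtain ⟨e, he⟩ := hf1 d; exact ⟨e, he⟩
  · intro e; exact ⟨f e, rfl⟩
  · rintro d e d' rfl hr
    obtain ⟨e', he'⟩ := E.serial e
    have : D.rel (f e) (f e') := (hf3 _ _).2 ⟨e, e', he', rfl, rfl⟩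
    exact ⟨e', he', hd _ _ _ this hr⟩
  · rintro d e e' rfl hr
    exact ⟨f e', (hf3 _ _).2 ⟨e, e', hr, rfl, rfl⟩, rfl⟩
  · intro d hd'
    rw [hf4] at hd'
    obtain ⟨e, he, rfl⟩ := hd'
    exact ⟨e, he, rfl⟩
  · intro e he
    exact ⟨f e, by rw [hf4]; exact ⟨e, he, rfl⟩, rfl⟩

/-- Refinements transfer across bisimulations. -/
theorem abs_transfer {AP : Type} {T U T' : TS AP} (h : Bisim T U) (ha : Abs T T') :
    ∃ U' : TS AP, Abs U U' ∧ Bisim T' U' := by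
  obtain ⟨Z, hZ⟩ := h
  obtain ⟨f, hf1, hf2, hf3, hf4⟩ := ha
  obtain ⟨x₀⟩ := T'.nonempty
  obtain ⟨u₀, hu₀⟩ := hZ.totL (f x₀)
  refine ⟨{ State := {p : T'.State × U.State // Z (f p.1) p.2}
            rel := fun a b => T'.rel a.1.1 b.1.1 ∧ U.rel a.1.2 b.1.2
            init := {a | a.1.1 ∈ T'.init ∧ a.1.2 ∈ U.init}
            label := fun a => U.label a.1.2
            nonempty := ⟨⟨(x₀, u₀), hu₀⟩⟩
            serial := ?_ }, ?_, ?_⟩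
  · rintro ⟨⟨x, u⟩, hzu⟩
    obtain ⟨x', hx'⟩ := T'.serial x
    have hT : T.rel (f x) (f x') := (hf3 _ _).2 ⟨x, x', hx', rfl, rfl⟩
    obtain ⟨u', hu', hzu'⟩ := hZ.forth _ _ _ hzu hT
    exact ⟨⟨(x', u'), hzu'⟩, hx', hu'⟩
  · refine ⟨fun a => a.1.2, ?_, fun a => rfl, ?_, ?_⟩
    · intro u
      obtain ⟨t, hz⟩ := hZ.totR u
      obtain ⟨x, rfl⟩ := hf1 t
      exact ⟨⟨(x, u), hz⟩, rfl⟩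
    · intro u u'
      constructor
      · intro hr
        obtain ⟨t, hz⟩ := hZ.totR u
        obtain ⟨t₂, ht₂, hz₂⟩ := hZ.back _ _ _ hz hr
        obtain ⟨x, x', hxx', hx, hx'⟩ := (hf3 _ _).1 ht₂
        exact ⟨⟨(x, u), by rw [hx]; exact hz⟩, ⟨(x', u'), by rw [hx']; exact hz₂⟩,
          ⟨hxx', hr⟩, rfl, rfl⟩
      · rintro ⟨a, b, ⟨h1, h2⟩, rfl, rfl⟩
        exact h2
    · ext u
      constructor
      · intro hu
        obtain ⟨t, ht, hz⟩ := hZ.initR u hu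
        rw [hf4] at ht
        obtain ⟨x, hx, rfl⟩ := ht
        exact ⟨⟨(x, u), hz⟩, ⟨hx, hu⟩, rfl⟩
      · rintro ⟨a, ⟨h1, h2⟩, rfl⟩
        exact h2
  · refine ⟨fun x a => a.1.1 = x, ?_⟩
    constructor
    · rintro x a rfl
      have := hZ.lab _ _ a.2
      rw [← this, hf2]
    · intro x
      obtain ⟨u, hz⟩ := hZ.totL (f x)
      exact ⟨⟨(x, u), hz⟩, rfl⟩
    · intro a; exact ⟨a.1.1, rfl⟩
    · rintro x a x' rfl hr
      have hT : T.rel (f a.1.1) (f x') := (hf3 _ _).2 ⟨a.1.1, x', hr, rfl, rfl⟩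
      obtain ⟨u', hu', hz'⟩ := hZ.forth _ _ _ a.2 hT
      exact ⟨⟨(x', u'), hz'⟩, ⟨hr, hu'⟩, rfl⟩
    · rintro x a a' rfl ⟨h1, h2⟩
      exact ⟨a'.1.1, h1, rfl⟩
    · intro x hx
      have hfx : f x ∈ T.init := by rw [hf4]; exact ⟨x, hx, rfl⟩
      obtain ⟨u, hu, hz⟩ := hZ.initL (f x) hfx
      exact ⟨⟨(x, u), hz⟩, ⟨hx, hu⟩, rfl⟩
    · rintro a ⟨h1, h2⟩
      exact ⟨a.1.1, h1, rfl⟩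

/-- Truth of modal formulas (under admissible valuations) is invariant under bisimilarity. -/
theorem sat_bisim_inv {V : ℕ → Set {S : TS ℕ // S ∈ (Set.univ : Set (TS ℕ))}}
    (hV : AdmissibleVal Set.univ V) (φ : MF) :
    ∀ T U : {S : TS ℕ // S ∈ (Set.univ : Set (TS ℕ))}, Bisim T.1 U.1 →
      (MF.Sat (refRel Set.univ) V φ T ↔ MF.Sat (refRel Set.univ) V φ U) := by
  induction φ with
  | top => intro T U h; simp [MF.Sat]
  | var p =>
      intro T U h
      obtain ⟨Φ, hΦ⟩ := hV p
      simp only [MF.Sat]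
      rw [hΦ T, hΦ U]
      exact bisim_sat h Φ
  | and φ ψ ih1 ih2 =>
      intro T U h
      simp only [MF.Sat, ih1 T U h, ih2 T U h]
  | neg φ ih =>
      intro T U h
      simp only [MF.Sat, ih T U h]
  | dia φ ih =>
      intro T U h
      simp only [MF.Sat]
      constructor
      · rintro ⟨T', hTT', hsat⟩
        obtain ⟨U'ts, hUU', hbis⟩ := abs_transfer h hTT'
        refine ⟨⟨U'ts, Set.mem_univ _⟩, hUU', ?_⟩
        exact (ih T' ⟨U'ts, Set.mem_univ _⟩ hbis).1 hsat
      · rintro ⟨U', hUU', hsat⟩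
        obtain ⟨T'ts, hTT', hbis⟩ := abs_transfer h.symm hUU'
        refine ⟨⟨T'ts, Set.mem_univ _⟩, hTT', ?_⟩
        exact (ih ⟨T'ts, Set.mem_univ _⟩ U' hbis.symm).2 hsat

/-- MLAR is closed under modus ponens. -/
theorem mlar_mp {φ ψ : MF} (hφ : φ ∈ MLAR) (h : φ.imp ψ ∈ MLAR) : ψ ∈ MLAR := by
  intro S V hV
  exact MF.sat_imp.1 (h S V hV) (hφ S V hV)

/-- MLAR is closed under necessitation. -/
theorem mlar_box {φ : MF} (hφ : φ ∈ MLAR) : φ.box ∈ MLAR := by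
  intro S V hV
  rw [MF.sat_box]
  intro v _
  exact hφ v V hV

/-- The K axiom is semantically valid everywhere. -/
theorem K_sat {W : Type*} (R : W → W → Prop) (V : ℕ → Set W) (α β : MF) (w : W) :
    MF.Sat R V (((α.imp β).box).imp ((α.box).imp (β.box))) w := by
  rw [MF.sat_imp, MF.sat_imp, MF.sat_box, MF.sat_box, MF.sat_box]
  intro h1 h2 v hv
  exact MF.sat_imp.1 (h1 v hv) (h2 v hv)

/-- The substitution core of MLAR. -/
def Lcore : Set MF := {φ | ∀ σ : ℕ → MF, φ.subst σ ∈ MLAR}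

theorem Lcore_normal : IsNormal Lcore := by
  refine ⟨?_, ?_, ?_, ?_, ?_⟩
  · intro φ hφ σ S V hV
    exact taut_sat hφ _ _ _ _
  · intro σ S V hV
    exact K_sat _ _ _ _ _
  · intro φ ψ hφ himp σ
    have h := himp σ
    rw [MF.subst_imp] at h
    exact mlar_mp (hφ σ) h
  · intro φ σ hφ τ
    rw [MF.subst_subst]
    exact hφ _
  · intro φ hφ σ
    rw [MF.subst_box]
    exact mlar_box (hφ σ)

theorem Lcore_subset : Lcore ⊆ MLAR := by
  intro φ hφ
  have := hφ MF.var
  rwa [MF.subst_var] at this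

theorem axT_Lcore : axT ∈ Lcore := by
  intro σ S V hV
  rw [show axT.subst σ = (σ 0).imp ((σ 0).dia) from rfl, MF.sat_imp]
  intro h
  exact ⟨S, abs_refl S.1, h⟩

theorem ax4_Lcore : ax4 ∈ Lcore := by
  intro σ S V hV
  rw [show ax4.subst σ = ((σ 0).dia.dia).imp ((σ 0).dia) from rfl, MF.sat_imp]
  rintro ⟨T, hST, U, hTU, h⟩
  exact ⟨U, abs_trans hST hTU, h⟩

theorem axDot1_Lcore : axDot1 ∈ Lcore := by
  intro σ S V hV
  rw [show axDot1.subst σ = ((σ 0).dia.box).imp ((σ 0).box.dia) from rfl, MF.sat_imp]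
  intro h
  rw [MF.sat_box] at h
  obtain ⟨D, hAbs, hdet⟩ := exists_det_ref S.1
  have hSD : refRel Set.univ S ⟨D, Set.mem_univ D⟩ := hAbs
  obtain ⟨e, hDe, hsate⟩ := h ⟨D, Set.mem_univ D⟩ hSD
  have inv := sat_bisim_inv hV (σ 0)
  have hbise : Bisim D e.1 := det_bisim hdet hDe
  have hsatD : MF.Sat (refRel Set.univ) V (σ 0) ⟨D, Set.mem_univ D⟩ :=
    (inv ⟨D, Set.mem_univ D⟩ e hbise).2 hsate
  refine ⟨⟨D, Set.mem_univ D⟩, hSD, ?_⟩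
  rw [MF.sat_box]
  intro v hv
  exact (inv ⟨D, Set.mem_univ D⟩ v (det_bisim hdet hv)).1 hsatD

end Aux

/-- S4.1 ⊆ MLAR (on the class of all transition systems over AP = ℕ). -/
theorem stmt_4 : S4Dot1 ⊆ MLAR := by
  intro φ hφ
  apply Lcore_subset
  refine Set.mem_sInter.1 hφ Lcore ⟨Lcore_normal, ?_⟩
  intro ψ hψ
  simp only [Set.mem_insert_iff, Set.mem_singleton_iff] at hψ
  rcases hψ with h | h | h
  · rw [h]; exact axT_Lcore
  · rw [h]; exact ax4_Lcore
  · rw [h]; exact axDot1_Lcore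

end MLAR
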